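/- arXiv:1405.7254 — 3 statements merged into one kernel-verified Lean document; each statement's English description precedes it below -/
import Mathlib

section
/- For every iteration index i ≥ 0, every solar state z, every channel state x, and every battery level y with 1 ≤ y ≤ N_B−1, the value-iteration functions are monotone in the battery level: V_i(z,x,y−1) ≤ V_i(z,x,y); moreover, for every action a ∈ {0,1} with a ≤ y−1, V_i^a(z,x,y−1) ≤ V_i^a(z,x,y). -/
/-!
On-off energy-harvesting MDP value iteration.
`Va` is the action-value update operator, `Viter i` is the `i`-th value-iteration
function `V_i`, and `VIa i a` is the action-value function `V_i^a`.
-/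

/-- The one-step action-value operator:
`Va NB aH pC pQ r lam V a z x y = a·r(x) + λ·Σ_j Σ_l Σ'_q aH(z,j)·pC(x,l)·pQ(z,q)·
V(j, l, min{N_B−1, y−a+q})`. -/
noncomputable def Va {NH NC : ℕ} (NB : ℕ) (aH : Fin NH → Fin NH → ℝ)
    (pC : Fin NC → Fin NC → ℝ) (pQ : Fin NH → ℕ → ℝ) (r : Fin NC → ℝ) (lam : ℝ)
    (V : Fin NH → Fin NC → ℕ → ℝ) (a : ℕ) (z : Fin NH) (x : Fin NC) (y : ℕ) : ℝ :=
  a * r x + lam * ∑ j : Fin NH, ∑ l : Fin NC,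
    ∑' q : ℕ, aH z j * pC x l * pQ z q * V j l (min (NB - 1) (y - a + q))

/-- Value iteration: `V_0 = 0` and `V_{i+1}(z,x,y) = max_{0 ≤ a ≤ min{y,1}} V_{i+1}^a(z,x,y)`. -/
noncomputable def Viter {NH NC : ℕ} (NB : ℕ) (aH : Fin NH → Fin NH → ℝ)
    (pC : Fin NC → Fin NC → ℝ) (pQ : Fin NH → ℕ → ℝ) (r : Fin NC → ℝ) (lam : ℝ) :
    ℕ → Fin NH → Fin NC → ℕ → ℝ
  | 0 => fun _ _ _ => 0
  | (i + 1) => fun z x y =>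
      (Finset.range (min y 1 + 1)).sup' ⟨0, Finset.mem_range.mpr (Nat.succ_pos _)⟩
        (fun a => Va NB aH pC pQ r lam (Viter NB aH pC pQ r lam i) a z x y)

/-- Action-value iteration: `V_0^a = 0` and `V_{i+1}^a = Va applied to V_i`. -/
noncomputable def VIa {NH NC : ℕ} (NB : ℕ) (aH : Fin NH → Fin NH → ℝ)
    (pC : Fin NC → Fin NC → ℝ) (pQ : Fin NH → ℕ → ℝ) (r : Fin NC → ℝ) (lam : ℝ) :
    ℕ → ℕ → Fin NH → Fin NC → ℕ → ℝ
  | 0 => fun _ _ _ _ => 0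
  | (i + 1) => fun a z x y => Va NB aH pC pQ r lam (Viter NB aH pC pQ r lam i) a z x y


section Aux

variable {NH NC : ℕ} {NB : ℕ} {aH : Fin NH → Fin NH → ℝ}
    {pC : Fin NC → Fin NC → ℝ} {pQ : Fin NH → ℕ → ℝ} {r : Fin NC → ℝ} {lam : ℝ}

lemma Viter_succ {i : ℕ} {z : Fin NH} {x : Fin NC} {y : ℕ} :
    Viter NB aH pC pQ r lam (i + 1) z x y =
      (Finset.range (min y 1 + 1)).sup' Finset.nonempty_range_add_one
        (fun a => Va NB aH pC pQ r lam (Viter NB aH pC pQ r lam i) a z x y) := rfl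

lemma summable_aux (hNB : 2 ≤ NB)
    (haH : ∀ z j, 0 ≤ aH z j) (hpC : ∀ x l, 0 ≤ pC x l)
    (hpQ : ∀ z q, 0 ≤ pQ z q) (hpQsummable : ∀ z, Summable (pQ z))
    (V : Fin NH → Fin NC → ℕ → ℝ) (hV0 : ∀ j l m, 0 ≤ V j l m)
    (z j : Fin NH) (x l : Fin NC) (t : ℕ → ℕ) (ht : ∀ q, t q < NB) :
    Summable (fun q => aH z j * pC x l * pQ z q * V j l (t q)) := by
  set S : ℝ := ∑ m ∈ Finset.range NB, V j l m with hS
  refine Summable.of_nonneg_of_le (fun q => ?_) (fun q => ?_)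
    ((hpQsummable z).mul_left (aH z j * pC x l * S))
  · exact mul_nonneg (mul_nonneg (mul_nonneg (haH z j) (hpC x l)) (hpQ z q)) (hV0 j l (t q))
  · have hVle : V j l (t q) ≤ S := by
      refine Finset.single_le_sum (fun m _ => hV0 j l m) ?_
      exact Finset.mem_range.2 (ht q)
    calc aH z j * pC x l * pQ z q * V j l (t q)
        ≤ aH z j * pC x l * pQ z q * S := by
          exact mul_le_mul_of_nonneg_left hVle
            (mul_nonneg (mul_nonneg (haH z j) (hpC x l)) (hpQ z q))
      _ = aH z j * pC x l * S * pQ z q := by ring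

lemma Va_nonneg (haH : ∀ z j, 0 ≤ aH z j) (hpC : ∀ x l, 0 ≤ pC x l)
    (hpQ : ∀ z q, 0 ≤ pQ z q) (hr : ∀ x, 0 ≤ r x) (hlam0 : 0 ≤ lam)
    (V : Fin NH → Fin NC → ℕ → ℝ) (hV0 : ∀ j l m, 0 ≤ V j l m)
    (a : ℕ) (z : Fin NH) (x : Fin NC) (y : ℕ) :
    0 ≤ Va NB aH pC pQ r lam V a z x y := by
  unfold Va
  refine add_nonneg (mul_nonneg (by positivity) (hr x)) (mul_nonneg hlam0 ?_)
  refine Finset.sum_nonneg fun j _ => Finset.sum_nonneg fun l _ => tsum_nonneg fun q => ?_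
  exact mul_nonneg (mul_nonneg (mul_nonneg (haH z j) (hpC x l)) (hpQ z q)) (hV0 j l _)

lemma Va_mono (hNB : 2 ≤ NB)
    (haH : ∀ z j, 0 ≤ aH z j) (hpC : ∀ x l, 0 ≤ pC x l)
    (hpQ : ∀ z q, 0 ≤ pQ z q) (hpQsummable : ∀ z, Summable (pQ z))
    (hlam0 : 0 ≤ lam)
    (V : Fin NH → Fin NC → ℕ → ℝ) (hV0 : ∀ j l m, 0 ≤ V j l m)
    (hVm : ∀ j l, Monotone (V j l))
    (a : ℕ) (z : Fin NH) (x : Fin NC) {y y' : ℕ} (h : y ≤ y') :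
    Va NB aH pC pQ r lam V a z x y ≤ Va NB aH pC pQ r lam V a z x y' := by
  unfold Va
  refine add_le_add_right (mul_le_mul_of_nonneg_left ?_ hlam0) _
  refine Finset.sum_le_sum fun j _ => Finset.sum_le_sum fun l _ => ?_
  refine Summable.tsum_le_tsum (fun q => ?_)
    (summable_aux hNB haH hpC hpQ hpQsummable V hV0 z j x l _ (fun q => by omega))
    (summable_aux hNB haH hpC hpQ hpQsummable V hV0 z j x l _ (fun q => by omega))
  refine mul_le_mul_of_nonneg_left (hVm j l ?_)
    (mul_nonneg (mul_nonneg (haH z j) (hpC x l)) (hpQ z q))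
  exact min_le_min le_rfl (by omega)

lemma viter_key (hNB : 2 ≤ NB)
    (haH : ∀ z j, 0 ≤ aH z j) (hpC : ∀ x l, 0 ≤ pC x l)
    (hpQ : ∀ z q, 0 ≤ pQ z q) (hpQsummable : ∀ z, Summable (pQ z))
    (hr : ∀ x, 0 ≤ r x) (hlam0 : 0 ≤ lam) :
    ∀ i : ℕ, (∀ j l m, 0 ≤ Viter NB aH pC pQ r lam i j l m) ∧
      (∀ j l, Monotone (Viter NB aH pC pQ r lam i j l)) := by
  intro i
  induction i with
  | zero => exact ⟨fun _ _ _ => le_rfl, fun _ _ => monotone_const⟩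
  | succ i ih =>
    obtain ⟨h0, hm⟩ := ih
    constructor
    · intro j l m
      have hmem : (0 : ℕ) ∈ Finset.range (min m 1 + 1) := by simp
      calc (0 : ℝ) ≤ Va NB aH pC pQ r lam (Viter NB aH pC pQ r lam i) 0 j l m :=
            Va_nonneg haH hpC hpQ hr hlam0 _ h0 0 j l m
        _ ≤ Viter NB aH pC pQ r lam (i + 1) j l m := by
            rw [Viter_succ]
            exact Finset.le_sup' (fun a => Va NB aH pC pQ r lam (Viter NB aH pC pQ r lam i) a j l m) hmem
    · intro j l y y' h
      rw [Viter_succ, Viter_succ]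
      refine Finset.sup'_le _ _ fun a ha => ?_
      have ha' : a ∈ Finset.range (min y' 1 + 1) := by
        simp only [Finset.mem_range] at ha ⊢; omega
      exact le_trans (Va_mono hNB haH hpC hpQ hpQsummable hlam0 _ h0 hm a j l h)
        (Finset.le_sup' (fun a => Va NB aH pC pQ r lam (Viter NB aH pC pQ r lam i) a j l y') ha')

end Aux

/-- Lemma 1: for every iteration index `i`, the value-iteration
functions are monotone in the battery level, and so are the action-value functions
for every feasible action `a ∈ {0,1}` with `a ≤ y − 1`. -/
theorem viter_monotone_in_battery {NH NC : ℕ} (NB : ℕ)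
    (hNH : 1 ≤ NH) (hNC : 1 ≤ NC) (hNB : 2 ≤ NB)
    (aH : Fin NH → Fin NH → ℝ) (pC : Fin NC → Fin NC → ℝ)
    (pQ : Fin NH → ℕ → ℝ) (r : Fin NC → ℝ) (lam : ℝ)
    (haH : ∀ z j, 0 ≤ aH z j) (haHsum : ∀ z, ∑ j, aH z j = 1)
    (hpC : ∀ x l, 0 ≤ pC x l) (hpCsum : ∀ x, ∑ l, pC x l = 1)
    (hpQ : ∀ z q, 0 ≤ pQ z q) (hpQsummable : ∀ z, Summable (pQ z))
    (hpQsum : ∀ z, ∑' q, pQ z q = 1)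
    (hr : ∀ x, 0 ≤ r x) (hlam0 : 0 ≤ lam) (hlam1 : lam ≤ 1)
    (i : ℕ) (z : Fin NH) (x : Fin NC) (y : ℕ) (hy1 : 1 ≤ y) (hy2 : y ≤ NB - 1) :
    Viter NB aH pC pQ r lam i z x (y - 1) ≤ Viter NB aH pC pQ r lam i z x y ∧
      ∀ a : ℕ, a ≤ 1 → a ≤ y - 1 →
        VIa NB aH pC pQ r lam i a z x (y - 1) ≤ VIa NB aH pC pQ r lam i a z x y := by
  
  obtain ⟨h0, hm⟩ := viter_key (lam := lam) (r := r) hNB haH hpC hpQ hpQsummable hr hlam0 i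
  refine ⟨hm z x (by omega : y - 1 ≤ y), fun a ha1 ha2 => ?_⟩
  cases i with
  | zero => simp [VIa]
  | succ i =>
    obtain ⟨h0', hm'⟩ := viter_key (lam := lam) (r := r) hNB haH hpC hpQ hpQsummable hr hlam0 i
    exact Va_mono hNB haH hpC hpQ hpQsummable hlam0 _ h0' hm' a z x (by omega : y - 1 ≤ y)
end

section
/- Suppose κ is an optimal threshold policy for the Bellman fixed point V*, i.e. for every (z,x): V*^1(z,x,y) ≤ V*^0(z,x,y) for all 1 ≤ y ≤ κ(z,x) and V*^1(z,x,y) ≥ V*^0(z,x,y) for all κ(z,x)+1 ≤ y ≤ N_B−1. Then for every solar state z and channel state x with 1 ≤ κ(z,x) ≤ N_B−2, the following two inequalities hold: r(x) ≤ λ·( pQ(z,0)·Ξ(z,x,κ(z,x)−1) + pQ(z,1)·Ξ(z,x,κ(z,x)) ) and r(x) ≥ λ·( pQ(z,0)·Ξ(z,x,κ(z,x)) + pQ(z,1)·Ξ(z,x,κ(z,x)+1) ). -/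
/-!
On-off energy-harvesting MDP: Bellman fixed point with two-level energy arrivals
(`q ∈ {0,1}`).  `VstarA Vstar a` is the action-value `V*^a` associated with a value
function `Vstar`, and `Xi` is the averaged one-step difference function `Ξ`.
-/

/-- The action-value associated with a value function `Vstar`:
`V*^a(z,x,y) = a·r(x) + λ·Σ_j Σ_l Σ_{q∈{0,1}} aH(z,j)·pC(x,l)·pQ(z,q)·
V*(j,l,min{N_B−1,y−a+q})`. -/
noncomputable def VstarA {NH NC : ℕ} (NB : ℕ) (aH : Fin NH → Fin NH → ℝ)
    (pC : Fin NC → Fin NC → ℝ) (pQ : Fin NH → ℕ → ℝ) (r : Fin NC → ℝ) (lam : ℝ)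
    (Vstar : Fin NH → Fin NC → ℕ → ℝ) (a : ℕ) (z : Fin NH) (x : Fin NC) (y : ℕ) : ℝ :=
  a * r x + lam * ∑ j : Fin NH, ∑ l : Fin NC, ∑ q ∈ Finset.range 2,
    aH z j * pC x l * pQ z q * Vstar j l (min (NB - 1) (y - a + q))

/-- `Ξ(z,x,y) = Σ_j Σ_l aH(z,j)·pC(x,l)·( V*(j,l,min{N_B−1,y+1}) − V*(j,l,min{N_B−1,y}) )`. -/
noncomputable def Xi {NH NC : ℕ} (NB : ℕ) (aH : Fin NH → Fin NH → ℝ)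
    (pC : Fin NC → Fin NC → ℝ) (Vstar : Fin NH → Fin NC → ℕ → ℝ)
    (z : Fin NH) (x : Fin NC) (y : ℕ) : ℝ :=
  ∑ j : Fin NH, ∑ l : Fin NC, aH z j * pC x l *
    (Vstar j l (min (NB - 1) (y + 1)) - Vstar j l (min (NB - 1) y))

/-- Theorem 3, key inequalities: if `κ` is an optimal threshold policy
for the Bellman fixed point `V*`, then for every `(z,x)` with `1 ≤ κ(z,x) ≤ N_B−2`,
`r(x) ≤ λ·( pQ(z,0)·Ξ(z,x,κ−1) + pQ(z,1)·Ξ(z,x,κ) )` and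
`r(x) ≥ λ·( pQ(z,0)·Ξ(z,x,κ) + pQ(z,1)·Ξ(z,x,κ+1) )`. -/
theorem threshold_necessary_inequalities {NH NC : ℕ} (NB : ℕ)
    (hNH : 1 ≤ NH) (hNC : 1 ≤ NC) (hNB : 2 ≤ NB)
    (aH : Fin NH → Fin NH → ℝ) (pC : Fin NC → Fin NC → ℝ)
    (pQ : Fin NH → ℕ → ℝ) (r : Fin NC → ℝ) (lam : ℝ)
    (haH : ∀ z j, 0 ≤ aH z j) (haHsum : ∀ z, ∑ j, aH z j = 1)
    (hpC : ∀ x l, 0 ≤ pC x l) (hpCsum : ∀ x, ∑ l, pC x l = 1)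
    (hpQ0 : ∀ z, 0 ≤ pQ z 0) (hpQ1 : ∀ z, 0 ≤ pQ z 1)
    (hpQsum : ∀ z, pQ z 0 + pQ z 1 = 1) (hpQhi : ∀ z q, 2 ≤ q → pQ z q = 0)
    (hr : ∀ x, 0 ≤ r x) (hlam0 : 0 ≤ lam) (hlam1 : lam ≤ 1)
    (Vstar : Fin NH → Fin NC → ℕ → ℝ)
    (hfix : ∀ (z : Fin NH) (x : Fin NC) (y : ℕ), y ≤ NB - 1 →
      Vstar z x y = (Finset.range (min y 1 + 1)).sup' Finset.nonempty_range_add_one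
        (fun a => VstarA NB aH pC pQ r lam Vstar a z x y))
    (κ : Fin NH → Fin NC → ℕ) (hκle : ∀ z x, κ z x ≤ NB - 1)
    (hthreshOff : ∀ (z : Fin NH) (x : Fin NC) (y : ℕ), 1 ≤ y → y ≤ κ z x →
      VstarA NB aH pC pQ r lam Vstar 1 z x y ≤ VstarA NB aH pC pQ r lam Vstar 0 z x y)
    (hthreshOn : ∀ (z : Fin NH) (x : Fin NC) (y : ℕ), κ z x + 1 ≤ y → y ≤ NB - 1 →
      VstarA NB aH pC pQ r lam Vstar 0 z x y ≤ VstarA NB aH pC pQ r lam Vstar 1 z x y)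
    (z : Fin NH) (x : Fin NC) (hκ1 : 1 ≤ κ z x) (hκ2 : κ z x ≤ NB - 2) :
    r x ≤ lam * (pQ z 0 * Xi NB aH pC Vstar z x (κ z x - 1) +
        pQ z 1 * Xi NB aH pC Vstar z x (κ z x)) ∧
      lam * (pQ z 0 * Xi NB aH pC Vstar z x (κ z x) +
        pQ z 1 * Xi NB aH pC Vstar z x (κ z x + 1)) ≤ r x := by
  have key : ∀ y : ℕ, 1 ≤ y →
      VstarA NB aH pC pQ r lam Vstar 1 z x y - VstarA NB aH pC pQ r lam Vstar 0 z x y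
        = r x - lam * (pQ z 0 * Xi NB aH pC Vstar z x (y - 1) +
            pQ z 1 * Xi NB aH pC Vstar z x y) := by
    intro y hy
    have h1 : y - 1 + 1 = y := Nat.sub_add_cancel hy
    simp only [VstarA, Xi, Finset.sum_range_succ, Finset.range_one, Finset.sum_singleton,
      Nat.sub_zero, h1, Nat.cast_one, Nat.cast_zero, zero_mul, zero_add, one_mul,
      Finset.mul_sum, mul_sub, sub_mul, Finset.sum_sub_distrib, Finset.sum_add_distrib]
    have e : ∀ (q w : ℕ),
        (∑ j : Fin NH, ∑ l : Fin NC, pQ z q * (aH z j * pC x l * Vstar j l ((NB - 1) ⊓ w)))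
          = ∑ j : Fin NH, ∑ l : Fin NC, aH z j * pC x l * pQ z q * Vstar j l ((NB - 1) ⊓ w) := by
      intro q w
      refine Finset.sum_congr rfl fun j _ => Finset.sum_congr rfl fun l _ => by ring
    simp only [e]
    ring_nf
    simp only [mul_comm, mul_left_comm, mul_assoc]
    ring
  constructor
  · have h := hthreshOff z x (κ z x) hκ1 le_rfl
    have hk := key (κ z x) hκ1
    linarith
  · have hy1 : 1 ≤ κ z x + 1 := le_add_self.trans le_rfl
    have h := hthreshOn z x (κ z x + 1) le_rfl (by omega)
    have hk := key (κ z x + 1) (by omega)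
    simp only [Nat.add_sub_cancel] at hk
    linarith
end

section
/- Suppose κ is an optimal threshold policy for the Bellman fixed point V* (i.e. for every (z,x): V*^1(z,x,y) ≤ V*^0(z,x,y) for all 1 ≤ y ≤ κ(z,x) and V*^1(z,x,y) ≥ V*^0(z,x,y) for all κ(z,x)+1 ≤ y ≤ N_B−1), and that λ > 0. Fix a solar state z and channel state x with 1 ≤ κ(z,x) ≤ N_B−2, and assume the strict monotonicity Ξ(z,x,κ(z,x)−1) > Ξ(z,x,κ(z,x)) and Ξ(z,x,κ(z,x)) > Ξ(z,x,κ(z,x)+1). Then the energy-deficiency probability necessarily satisfies φ(z,x,0) ≤ pQ(z,0) ≤ φ(z,x,1), where φ(z,x,n) = ( r(x)/λ − Ξ(z,x,κ(z,x)+n) ) / ( Ξ(z,x,κ(z,x)+n−1) − Ξ(z,x,κ(z,x)+n) ) for n ∈ {0,1}. -/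
private lemma sum_helper' {NH NC : ℕ} (aH : Fin NH → ℝ) (pC : Fin NC → ℝ) (p0 p1 : ℝ)
    (V : Fin NH → Fin NC → ℕ → ℝ) (n0 n1 n2 : ℕ) :
    (∑ j, ∑ l, (aH j * pC l * p0 * V j l n1 + aH j * pC l * p1 * V j l n2))
      - (∑ j, ∑ l, (aH j * pC l * p0 * V j l n0 + aH j * pC l * p1 * V j l n1))
    = p0 * (∑ j, ∑ l, aH j * pC l * (V j l n1 - V j l n0))
      + p1 * (∑ j, ∑ l, aH j * pC l * (V j l n2 - V j l n1)) := by
  simp only [Finset.mul_sum, ← Finset.sum_add_distrib, ← Finset.sum_sub_distrib]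
  exact Finset.sum_congr rfl fun j _ => Finset.sum_congr rfl fun l _ => by ring

/-- Theorem 3, energy-deficiency condition: if `κ` is an optimal
threshold policy for the Bellman fixed point `V*`, `λ > 0`, and `Ξ` is strictly
decreasing around the threshold, then the energy-deficiency probability satisfies
`φ(z,x,0) ≤ pQ(z,0) ≤ φ(z,x,1)`. -/
theorem energy_deficiency_condition {NH NC : ℕ} (NB : ℕ)
    (hNH : 1 ≤ NH) (hNC : 1 ≤ NC) (hNB : 2 ≤ NB)
    (aH : Fin NH → Fin NH → ℝ) (pC : Fin NC → Fin NC → ℝ)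
    (pQ : Fin NH → ℕ → ℝ) (r : Fin NC → ℝ) (lam : ℝ)
    (haH : ∀ z j, 0 ≤ aH z j) (haHsum : ∀ z, ∑ j, aH z j = 1)
    (hpC : ∀ x l, 0 ≤ pC x l) (hpCsum : ∀ x, ∑ l, pC x l = 1)
    (hpQ0 : ∀ z, 0 ≤ pQ z 0) (hpQ1 : ∀ z, 0 ≤ pQ z 1)
    (hpQsum : ∀ z, pQ z 0 + pQ z 1 = 1) (hpQhi : ∀ z q, 2 ≤ q → pQ z q = 0)
    (hr : ∀ x, 0 ≤ r x) (hlam0 : 0 ≤ lam) (hlam1 : lam ≤ 1)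
    (Vstar : Fin NH → Fin NC → ℕ → ℝ)
    (hfix : ∀ (z : Fin NH) (x : Fin NC) (y : ℕ), y ≤ NB - 1 →
      Vstar z x y = (Finset.range (min y 1 + 1)).sup' Finset.nonempty_range_add_one
        (fun a => VstarA NB aH pC pQ r lam Vstar a z x y))
    (κ : Fin NH → Fin NC → ℕ) (hκle : ∀ z x, κ z x ≤ NB - 1)
    (hthreshOff : ∀ (z : Fin NH) (x : Fin NC) (y : ℕ), 1 ≤ y → y ≤ κ z x →
      VstarA NB aH pC pQ r lam Vstar 1 z x y ≤ VstarA NB aH pC pQ r lam Vstar 0 z x y)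
    (hthreshOn : ∀ (z : Fin NH) (x : Fin NC) (y : ℕ), κ z x + 1 ≤ y → y ≤ NB - 1 →
      VstarA NB aH pC pQ r lam Vstar 0 z x y ≤ VstarA NB aH pC pQ r lam Vstar 1 z x y)
    (hlampos : 0 < lam)
    (z : Fin NH) (x : Fin NC) (hκ1 : 1 ≤ κ z x) (hκ2 : κ z x ≤ NB - 2)
    (hXi1 : Xi NB aH pC Vstar z x (κ z x) < Xi NB aH pC Vstar z x (κ z x - 1))
    (hXi2 : Xi NB aH pC Vstar z x (κ z x + 1) < Xi NB aH pC Vstar z x (κ z x)) :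
    (r x / lam - Xi NB aH pC Vstar z x (κ z x)) /
        (Xi NB aH pC Vstar z x (κ z x - 1) - Xi NB aH pC Vstar z x (κ z x)) ≤ pQ z 0 ∧
      pQ z 0 ≤ (r x / lam - Xi NB aH pC Vstar z x (κ z x + 1)) /
        (Xi NB aH pC Vstar z x (κ z x) - Xi NB aH pC Vstar z x (κ z x + 1)) := by
  have key : ∀ y : ℕ, 1 ≤ y →
      VstarA NB aH pC pQ r lam Vstar 0 z x y - VstarA NB aH pC pQ r lam Vstar 1 z x y
      = lam * (pQ z 0 * Xi NB aH pC Vstar z x (y - 1) + pQ z 1 * Xi NB aH pC Vstar z x y)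
        - r x := by
    intro y hy
    have h1 : y - 1 + 1 = y := by omega
    have h := sum_helper' (aH z) (pC x) (pQ z 0) (pQ z 1)
      (fun j l n => Vstar j l (min (NB - 1) n)) (y - 1) y (y + 1)
    simp only [VstarA, Xi, Finset.sum_range_succ, Finset.sum_range_zero, zero_add,
      Nat.cast_one, Nat.cast_zero, one_mul, zero_mul, Nat.sub_zero, add_zero, h1]
    beta_reduce at h
    linear_combination lam * h
  set A := Xi NB aH pC Vstar z x (κ z x - 1) with hA
  set B := Xi NB aH pC Vstar z x (κ z x) with hB
  set C := Xi NB aH pC Vstar z x (κ z x + 1) with hC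
  have hp1 : pQ z 1 = 1 - pQ z 0 := by linarith [hpQsum z]
  -- y = κ : action 1 ≤ action 0
  have hOff := hthreshOff z x (κ z x) hκ1 le_rfl
  have hkey1 := key (κ z x) hκ1
  have hlow : r x ≤ lam * (pQ z 0 * A + (1 - pQ z 0) * B) := by
    rw [← hp1]; linarith [hkey1, hOff]
  -- y = κ + 1 : action 0 ≤ action 1
  have hOn := hthreshOn z x (κ z x + 1) le_rfl (by omega)
  have hkey2 := key (κ z x + 1) (by omega)
  have hκs : κ z x + 1 - 1 = κ z x := rfl
  rw [hκs] at hkey2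
  have hhigh : lam * (pQ z 0 * B + (1 - pQ z 0) * C) ≤ r x := by
    rw [← hp1]; linarith [hkey2, hOn]
  constructor
  · rw [div_le_iff₀ (by linarith : (0:ℝ) < A - B)]
    have h1 : r x / lam ≤ pQ z 0 * A + (1 - pQ z 0) * B := by
      rw [div_le_iff₀ hlampos]
      nlinarith [hlow]
    nlinarith [h1]
  · rw [le_div_iff₀ (by linarith : (0:ℝ) < B - C)]
    have h2 : pQ z 0 * B + (1 - pQ z 0) * C ≤ r x / lam := by
      rw [le_div_iff₀ hlampos]
      nlinarith [hhigh]
    nlinarith [h2]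
end
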